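/- (The boundary function g solves the linearized PBE in the solvent away from the charges.) Let E = EuclideanSpace ℝ (Fin 3), let x₁, …, x_m ∈ E, Q₁, …, Q_m ∈ ℝ, and let ε_s > 0, κ̄_s ≥ 0 and α > 0 be real constants. Define g : E → ℝ by g(y) = α ∑_{i=1}^{m} (Q_i/(ε_s ‖y − x_i‖)) · exp(−κ̄_s ‖y − x_i‖ / √ε_s). Then for every x ∈ E with x ≠ x_i for all i, g is twice continuously differentiable in a neighborhood of x and −ε_s · ∑_{j=1}^{3} ∂²g/∂y_j²(x) + κ̄_s² · g(x) = 0. -/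

import Mathlib

noncomputable section PBEaux
namespace PBEaux

/-- radial profile `exp(-c√t)/√t` as a function of `t = r²`. -/
def ψ (c t : ℝ) : ℝ := Real.exp (-c * Real.sqrt t) / Real.sqrt t

def ψ₁ (c t : ℝ) : ℝ :=
  -((c * Real.sqrt t + 1) * Real.exp (-c * Real.sqrt t)) / (2 * Real.sqrt t ^ 3)

def ψ₂ (c t : ℝ) : ℝ :=
  (c ^ 2 * Real.sqrt t ^ 2 + 3 * (c * Real.sqrt t + 1)) * Real.exp (-c * Real.sqrt t) /
    (4 * Real.sqrt t ^ 5)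

lemma hasDerivAt_ψ (c : ℝ) {t : ℝ} (ht : 0 < t) : HasDerivAt (ψ c) (ψ₁ c t) t := by
  have hs : 0 < Real.sqrt t := Real.sqrt_pos.2 ht
  have hs' : HasDerivAt Real.sqrt (1 / (2 * Real.sqrt t)) t := Real.hasDerivAt_sqrt ht.ne'
  have he : HasDerivAt (fun t => Real.exp (-c * Real.sqrt t))
      (Real.exp (-c * Real.sqrt t) * (-c * (1 / (2 * Real.sqrt t)))) t :=
    (hs'.const_mul (-c)).exp
  have h := he.fun_div hs' hs.ne'
  refine h.congr_deriv ?_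
  unfold ψ₁
  field_simp
  have hst : Real.sqrt t ^ 2 = t := Real.sq_sqrt ht.le
  generalize hgen : Real.sqrt t = s at hst ⊢
  ring

lemma hasDerivAt_ψ₁ (c : ℝ) {t : ℝ} (ht : 0 < t) : HasDerivAt (ψ₁ c) (ψ₂ c t) t := by
  have hs : 0 < Real.sqrt t := Real.sqrt_pos.2 ht
  have hs' : HasDerivAt Real.sqrt (1 / (2 * Real.sqrt t)) t := Real.hasDerivAt_sqrt ht.ne'
  have he : HasDerivAt (fun t => Real.exp (-c * Real.sqrt t))
      (Real.exp (-c * Real.sqrt t) * (-c * (1 / (2 * Real.sqrt t)))) t :=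
    (hs'.const_mul (-c)).exp
  have hnum := (((hs'.const_mul c).add_const 1).fun_mul he).fun_neg
  have hden := (hs'.fun_pow 3).const_mul (2 : ℝ)
  have hd : (2 : ℝ) * Real.sqrt t ^ 3 ≠ 0 := by positivity
  have h := hnum.fun_div hden hd
  refine h.congr_deriv ?_
  unfold ψ₂
  field_simp
  have hst : Real.sqrt t ^ 2 = t := Real.sq_sqrt ht.le
  generalize hgen : Real.sqrt t = s at hst ⊢
  ring

lemma key_identity (c : ℝ) {t : ℝ} (ht : 0 < t) :
    4 * t * ψ₂ c t + 6 * ψ₁ c t = c ^ 2 * ψ c t := by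
  have hs : 0 < Real.sqrt t := Real.sqrt_pos.2 ht
  have hst : Real.sqrt t ^ 2 = t := Real.sq_sqrt ht.le
  unfold ψ ψ₁ ψ₂
  field_simp
  have hst : Real.sqrt t ^ 2 = t := Real.sq_sqrt ht.le
  generalize hgen : Real.sqrt t = s at hst ⊢
  rw [← hst]
  ring

lemma contDiffAt_ψ (c : ℝ) {t : ℝ} (ht : 0 < t) : ContDiffAt ℝ 2 (ψ c) t := by
  have h1 : ContDiffAt ℝ 2 Real.sqrt t := Real.contDiffAt_sqrt ht.ne'
  exact ((contDiffAt_const.mul h1).exp).div h1 (Real.sqrt_pos.2 ht).ne'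

end PBEaux

noncomputable section
namespace PBEaux2

local notation "E" => EuclideanSpace ℝ (Fin 3)

lemma hasFDerivAt_q (a y : E) :
    HasFDerivAt (fun z : E => ‖z - a‖ ^ 2) (2 • (innerSL ℝ (y - a))) y := by
  have h := ((hasFDerivAt_id y).sub_const a).norm_sq
  simpa using h

lemma Dq_apply (a y : E) (j : Fin 3) :
    (2 • (innerSL ℝ (y - a))) (EuclideanSpace.single j (1:ℝ)) = 2 * (y j - a j) := by
  simp [EuclideanSpace.inner_single_right, PiLp.sub_apply, real_inner_comm]

lemma proj_hasFDerivAt (b : ℝ) (y : E) (j : Fin 3) :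
    HasFDerivAt (fun z : E => 2 * (z j - b)) ((2:ℝ) • (EuclideanSpace.proj j : E →L[ℝ] ℝ)) y :=
  (((EuclideanSpace.proj j : E →L[ℝ] ℝ).hasFDerivAt.sub_const b).const_mul 2)

lemma proj_single (j : Fin 3) :
    (EuclideanSpace.proj j : E →L[ℝ] ℝ) (EuclideanSpace.single j (1:ℝ)) = 1 := by
  simp

lemma sum_sq_coords (v : E) : ∑ j : Fin 3, v j ^ 2 = ‖v‖ ^ 2 := by
  rw [PiLp.norm_sq_eq_of_L2]
  simp [Real.norm_eq_abs, sq_abs]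

end PBEaux2

open PBEaux PBEaux2

/-- The boundary function
`g (y) = α * ∑ i, (Q i / (ε_s * ‖y - x i‖)) * exp (-κ̄_s * ‖y - x i‖ / √ε_s)`
solves the linearized PBE `-ε_s Δ g + κ̄_s² g = 0` in the solvent away from the charges. -/
theorem boundary_function_solves_linearized_PBE
    (m : ℕ) (xs : Fin m → EuclideanSpace ℝ (Fin 3)) (Q : Fin m → ℝ)
    (εs κs α : ℝ) (hεs : 0 < εs) (hκs : 0 ≤ κs) (hα : 0 < α)
    (x : EuclideanSpace ℝ (Fin 3)) (hx : ∀ i, x ≠ xs i) :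
    ContDiffAt ℝ 2
      (fun y : EuclideanSpace ℝ (Fin 3) =>
        α * ∑ i, Q i / (εs * ‖y - xs i‖) *
          Real.exp (-κs * ‖y - xs i‖ / Real.sqrt εs)) x ∧
    -εs * (∑ j : Fin 3,
      fderiv ℝ
        (fun y : EuclideanSpace ℝ (Fin 3) =>
          fderiv ℝ
            (fun z : EuclideanSpace ℝ (Fin 3) =>
              α * ∑ i, Q i / (εs * ‖z - xs i‖) *
                Real.exp (-κs * ‖z - xs i‖ / Real.sqrt εs)) y
            (EuclideanSpace.single j (1 : ℝ)))
        x (EuclideanSpace.single j (1 : ℝ)))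
      + κs ^ 2 *
        (α * ∑ i, Q i / (εs * ‖x - xs i‖) *
          Real.exp (-κs * ‖x - xs i‖ / Real.sqrt εs)) = 0 := by
  classical
  have hsε : 0 < Real.sqrt εs := Real.sqrt_pos.2 hεs
  set c : ℝ := κs / Real.sqrt εs with hc
  set C : Fin m → ℝ := fun i => α * Q i / εs with hC
  -- rewrite the function in the form `∑ i, C i * ψ c (‖y - xs i‖ ^ 2)`
  have hgeq : (fun y : EuclideanSpace ℝ (Fin 3) =>
      α * ∑ i, Q i / (εs * ‖y - xs i‖) * Real.exp (-κs * ‖y - xs i‖ / Real.sqrt εs))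
      = fun y => ∑ i, C i * ψ c (‖y - xs i‖ ^ 2) := by
    funext y
    rw [Finset.mul_sum]
    refine Finset.sum_congr rfl fun i _ => ?_
    by_cases h : y = xs i
    · simp [h, ψ, hC]
    · have hr : 0 < ‖y - xs i‖ := by
        simpa [norm_pos_iff] using sub_ne_zero.2 h
      have hrs : Real.sqrt (‖y - xs i‖ ^ 2) = ‖y - xs i‖ := Real.sqrt_sq (norm_nonneg _)
      have hearg : -κs * ‖y - xs i‖ / Real.sqrt εs = -c * ‖y - xs i‖ := by
        rw [hc]; ring
      unfold ψ
      rw [hrs, hearg, hC]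
      field_simp
  have ht : ∀ (i : Fin m) {y : EuclideanSpace ℝ (Fin 3)}, y ≠ xs i → (0:ℝ) < ‖y - xs i‖ ^ 2 := by
    intro i y hy
    have h0 : (0:ℝ) < ‖y - xs i‖ := norm_pos_iff.2 (sub_ne_zero.2 hy)
    positivity
  -- part 1 : ContDiffAt
  have hcd : ContDiffAt ℝ 2
      (fun y : EuclideanSpace ℝ (Fin 3) => ∑ i, C i * ψ c (‖y - xs i‖ ^ 2)) x := by
    apply ContDiffAt.sum
    intro i _
    have h1 : ContDiffAt ℝ 2 (fun y : EuclideanSpace ℝ (Fin 3) => ‖y - xs i‖ ^ 2) x :=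
      ((contDiff_id.sub contDiff_const).norm_sq ℝ).contDiffAt
    exact contDiffAt_const.mul ((contDiffAt_ψ c (ht i (hx i))).comp (g := ψ c) x h1)
  -- first derivative on the set of regular points
  have hterm1 : ∀ (i : Fin m) (y : EuclideanSpace ℝ (Fin 3)), y ≠ xs i →
      HasFDerivAt (fun z : EuclideanSpace ℝ (Fin 3) => C i * ψ c (‖z - xs i‖ ^ 2))
        ((C i * ψ₁ c (‖y - xs i‖ ^ 2)) • (2 • (innerSL ℝ (y - xs i)))) y := by
    intro i y hy
    have h := ((hasDerivAt_ψ c (ht i hy)).comp_hasFDerivAt y (hasFDerivAt_q (xs i) y)).const_mul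
      (C i)
    simpa [smul_smul] using h
  have hg1 : ∀ y : EuclideanSpace ℝ (Fin 3), (∀ i, y ≠ xs i) →
      HasFDerivAt (fun z : EuclideanSpace ℝ (Fin 3) => ∑ i, C i * ψ c (‖z - xs i‖ ^ 2))
        (∑ i, (C i * ψ₁ c (‖y - xs i‖ ^ 2)) • (2 • (innerSL ℝ (y - xs i)))) y :=
    fun y hy => HasFDerivAt.fun_sum fun i _ => hterm1 i y (hy i)
  have hU : ∀ᶠ y in nhds x, ∀ i, y ≠ xs i :=
    (Filter.eventually_all).2 fun i => eventually_ne_nhds (hx i)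
  have hev : ∀ j : Fin 3,
      (fun y : EuclideanSpace ℝ (Fin 3) =>
        fderiv ℝ (fun z : EuclideanSpace ℝ (Fin 3) => ∑ i, C i * ψ c (‖z - xs i‖ ^ 2)) y
          (EuclideanSpace.single j (1:ℝ)))
      =ᶠ[nhds x]
      (fun y : EuclideanSpace ℝ (Fin 3) =>
        ∑ i, C i * ψ₁ c (‖y - xs i‖ ^ 2) * (2 * (y j - xs i j))) := by
    intro j
    filter_upwards [hU] with y hy
    rw [(hg1 y hy).fderiv]
    rw [ContinuousLinearMap.sum_apply]
    refine Finset.sum_congr rfl fun i _ => ?_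
    rw [ContinuousLinearMap.smul_apply, Dq_apply, smul_eq_mul, mul_assoc]
  -- second derivative of each term at x
  have hsecond : ∀ j : Fin 3,
      HasFDerivAt (fun y : EuclideanSpace ℝ (Fin 3) =>
          ∑ i, C i * ψ₁ c (‖y - xs i‖ ^ 2) * (2 * (y j - xs i j)))
        (∑ i, ((C i * ψ₁ c (‖x - xs i‖ ^ 2)) • ((2:ℝ) • (EuclideanSpace.proj j :
              EuclideanSpace ℝ (Fin 3) →L[ℝ] ℝ))
          + (2 * (x j - xs i j)) •
            ((C i * ψ₂ c (‖x - xs i‖ ^ 2)) • (2 • (innerSL ℝ (x - xs i)))))) x := by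
    intro j
    refine HasFDerivAt.fun_sum fun i _ => ?_
    have hA : HasFDerivAt (fun y : EuclideanSpace ℝ (Fin 3) => C i * ψ₁ c (‖y - xs i‖ ^ 2))
        ((C i * ψ₂ c (‖x - xs i‖ ^ 2)) • (2 • (innerSL ℝ (x - xs i)))) x := by
      have h := ((hasDerivAt_ψ₁ c (ht i (hx i))).comp_hasFDerivAt x
        (hasFDerivAt_q (xs i) x)).const_mul (C i)
      simpa [smul_smul] using h
    have hB := proj_hasFDerivAt (xs i j) x j
    exact hA.mul hB
  have hεc : εs * c ^ 2 = κs ^ 2 := by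
    rw [hc, div_pow, Real.sq_sqrt hεs.le]
    field_simp
  have h2 : ∀ j : Fin 3,
      fderiv ℝ (fun y : EuclideanSpace ℝ (Fin 3) =>
          fderiv ℝ (fun z : EuclideanSpace ℝ (Fin 3) => ∑ i, C i * ψ c (‖z - xs i‖ ^ 2)) y
            (EuclideanSpace.single j (1:ℝ))) x (EuclideanSpace.single j (1:ℝ))
      = ∑ i, C i * (4 * (x j - xs i j) ^ 2 * ψ₂ c (‖x - xs i‖ ^ 2)
          + 2 * ψ₁ c (‖x - xs i‖ ^ 2)) := by
    intro j
    rw [Filter.EventuallyEq.fderiv_eq (hev j), (hsecond j).fderiv,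
      ContinuousLinearMap.sum_apply]
    refine Finset.sum_congr rfl fun i _ => ?_
    rw [ContinuousLinearMap.add_apply, ContinuousLinearMap.smul_apply,
      ContinuousLinearMap.smul_apply, ContinuousLinearMap.smul_apply, ContinuousLinearMap.smul_apply, Dq_apply, proj_single]
    simp only [smul_eq_mul]
    ring
  rw [hgeq]
  refine ⟨hcd, ?_⟩
  have hgx : α * ∑ i, Q i / (εs * ‖x - xs i‖) * Real.exp (-κs * ‖x - xs i‖ / Real.sqrt εs)
      = ∑ i, C i * ψ c (‖x - xs i‖ ^ 2) := congrFun hgeq x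
  rw [hgx]
  have hswap : (∑ j : Fin 3,
      fderiv ℝ (fun y : EuclideanSpace ℝ (Fin 3) =>
          fderiv ℝ (fun z : EuclideanSpace ℝ (Fin 3) => ∑ i, C i * ψ c (‖z - xs i‖ ^ 2)) y
            (EuclideanSpace.single j (1:ℝ))) x (EuclideanSpace.single j (1:ℝ)))
      = ∑ i, C i * (c ^ 2 * ψ c (‖x - xs i‖ ^ 2)) := by
    rw [Finset.sum_congr rfl fun j _ => h2 j, Finset.sum_comm]
    refine Finset.sum_congr rfl fun i _ => ?_
    have h3 : ∑ j : Fin 3, (x j - xs i j) ^ 2 = ‖x - xs i‖ ^ 2 := by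
      have h4 := sum_sq_coords (x - xs i)
      simpa [PiLp.sub_apply] using h4
    have hkey := key_identity c (ht i (hx i))
    rw [Fin.sum_univ_three] at h3 ⊢
    linear_combination C i * hkey + 4 * C i * ψ₂ c (‖x - xs i‖ ^ 2) * h3
  rw [hswap, Finset.mul_sum, Finset.mul_sum, ← Finset.sum_add_distrib]
  refine Finset.sum_eq_zero fun i _ => ?_
  linear_combination (-(C i * ψ c (‖x - xs i‖ ^ 2))) * hεc
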